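/- (Two-edge correlation formula.) Let a,b,c > 0, set A = (a−b−c)/(a+b+c), B = (b−a−c)/(a+b+c), C = (c−a−b)/(a+b+c), assume ABC ≠ 0, and let ε_a, ε_b, ε_c ∈ ℂ satisfy ε_b ε_c = A, ε_a ε_c = B, ε_a ε_b = C. Let e and f be distinct edges of E_n, with endpoints u₀, v₀ and x₀, y₀ respectively, such that 1 + ε_e² ≠ 0 and 1 + ε_f² ≠ 0 (where ε_g = ε_s for an edge g of type s). Then Σ_{σ^v ∈ {−1,+1}^{V_n}} W(σ^v) ≠ 0 and the two-edge correlation of the 1-2 model satisfies E_{μ_n}[σ(e)σ(f)] = ( Σ_{σ^v} D_{e,f}(σ^v) W(σ^v) ) / ( Σ_{σ^v} W(σ^v) ), where W(σ^v) = ∏_{g ∈ E_n} (1 + ε_g² σ^v_u σ^v_v) (u, v the endpoints of g) and D_{e,f}(σ^v) = ε_e (σ^v_{u₀} + σ^v_{v₀}) ε_f (σ^v_{x₀} + σ^v_{y₀}) / ((1 + ε_e²)(1 + ε_f²)). -/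

import Mathlib

open MeasureTheory Filter Topology

/-- The three edge types of the hexagonal lattice: `a` (horizontal),
`b` (NW/SE), `c` (NE/SW). -/
inductive EType : Type
  | a : EType
  | b : EType
  | c : EType
deriving DecidableEq

instance : Fintype EType :=
  ⟨{EType.a, EType.b, EType.c}, fun x => by cases x <;> simp⟩

/-- A vertex of the (toroidal or infinite) hexagonal lattice with coordinates in `α`. -/
abbrev HexVtx (α : Type) : Type := (α × α) × Bool

/-- An edge of the hexagonal lattice: its type together with coordinates in `α`. -/
abbrev HexEdge (α : Type) : Type := EType × α × α

/-- The `s`-type edge incident to the vertex `v`. -/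
def edgeAt {α : Type} [Sub α] [One α] (v : HexVtx α) : EType → HexEdge α
  | .a => (.a, v.1)
  | .b => if v.2 then (.b, v.1) else (.b, (v.1.1, v.1.2 - 1))
  | .c => if v.2 then (.c, v.1) else (.c, (v.1.1 - 1, v.1.2))

/-- The two endpoints of an edge. -/
def ends {α : Type} [Add α] [One α] : HexEdge α → HexVtx α × HexVtx α
  | (.a, x, y) => (((x, y), false), ((x, y), true))
  | (.b, x, y) => (((x, y), true), ((x, y + 1), false))
  | (.c, x, y) => (((x, y), true), ((x + 1, y), false))

/-- The 1-2 model vertex weight of a triple of incident edge spins. -/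
def vWt (a b c : ℝ) (sa sb sc : Bool) : ℝ :=
  if sb = sc ∧ sa ≠ sb then a
  else if sa = sc ∧ sb ≠ sa then b
  else if sa = sb ∧ sc ≠ sa then c
  else 0

/-- Vertices of the toroidal lattice `H_n`. -/
abbrev VF (n : ℕ) : Type := HexVtx (ZMod n)

/-- Edges of the toroidal lattice `H_n`. -/
abbrev EF (n : ℕ) : Type := HexEdge (ZMod n)

/-- Spin configurations on the edges of `H_n`; `true` means spin `+1`. -/
abbrev ConfF (n : ℕ) : Type := EF n → Bool

/-- The 1-2 model weight of a configuration on `H_n`. -/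
def confWt (n : ℕ) [NeZero n] (a b c : ℝ) (σ : ConfF n) : ℝ :=
  ∏ v : VF n, vWt a b c (σ (edgeAt v .a)) (σ (edgeAt v .b)) (σ (edgeAt v .c))

/-- The 1-2 model partition function on `H_n`. -/
noncomputable def Zn (n : ℕ) [NeZero n] (a b c : ℝ) : ℝ :=
  ∑ σ : ConfF n, confWt n a b c σ

/-- Vertices of the infinite hexagonal lattice `H`. -/
abbrev VI : Type := HexVtx ℤ

/-- Edges of the infinite hexagonal lattice `H`. -/
abbrev EI : Type := HexEdge ℤ

/-- Configurations on the infinite lattice: the space `Ω = {−1,+1}^𝔼`. -/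
abbrev Config : Type := EI → Bool

/-- Periodic lift of a configuration on `H_n` to the infinite lattice. -/
def liftConf (n : ℕ) (σ : ConfF n) : Config :=
  fun e => σ (e.1, ((e.2.1 : ZMod n), (e.2.2 : ZMod n)))

/-- The pushforward `μ̂_n` on `Ω` of the 1-2 model measure `μ_n` on `H_n`. -/
noncomputable def muHat (n : ℕ) [NeZero n] (a b c : ℝ) : Measure Config :=
  ∑ σ : ConfF n, ENNReal.ofReal (confWt n a b c σ / Zn n a b c) •
    Measure.dirac (liftConf n σ)

/-- `μ` is the weak limit of the sequence `μ̂_n` (tested against all bounded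
continuous functions). -/
def IsWeakLimit (a b c : ℝ) (μ : Measure Config) : Prop :=
  IsProbabilityMeasure μ ∧
    ∀ f : BoundedContinuousFunction Config ℝ,
      Tendsto (fun n : ℕ => ∫ ω, f ω ∂ muHat (n + 1) a b c) atTop (𝓝 (∫ ω, f ω ∂ μ))

/-- The spin value (`±1`) of a Boolean state, as a complex number. -/
def cspin (s : Bool) : ℂ := if s then 1 else -1

/-- The spin-vector weight `w(σ^v, σ^e)` of a pair of vertex and midpoint spin
configurations on `H_n`, with half-edge constants `ε_a, ε_b, ε_c ∈ ℂ`. -/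
noncomputable def spinWt (n : ℕ) [NeZero n] (ε : EType → ℂ)
    (σv : VF n → Bool) (σe : ConfF n) : ℂ :=
  ∏ v : VF n, ∏ s : EType, (1 + ε s * cspin (σv v) * cspin (σe (edgeAt v s)))

/-- The two-edge correlation `E_{μ_n}[σ(e)σ(f)]` of the 1-2 model on `H_n`. -/
noncomputable def corrFin (n : ℕ) [NeZero n] (a b c : ℝ) (e f : EF n) : ℝ :=
  (∑ σ : ConfF n,
      (if σ e then (1 : ℝ) else -1) * (if σ f then (1 : ℝ) else -1) *
        confWt n a b c σ) / Zn n a b c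

/-- The Ising-type weight `W(σ^v) = ∏_g (1 + ε_g² σ^v_u σ^v_v)` on vertex spins. -/
noncomputable def isingWt (n : ℕ) [NeZero n] (ε : EType → ℂ)
    (σv : VF n → Bool) : ℂ :=
  ∏ g : EF n, (1 + (ε g.1) ^ 2 * cspin (σv (ends g).1) * cspin (σv (ends g).2))

/-- The factor `D_{e,f}(σ^v)` in the two-edge correlation formula. -/
noncomputable def Dfactor (n : ℕ) [NeZero n] (ε : EType → ℂ) (e f : EF n)
    (σv : VF n → Bool) : ℂ :=
  ε e.1 * (cspin (σv (ends e).1) + cspin (σv (ends e).2)) *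
    ε f.1 * (cspin (σv (ends f).1) + cspin (σv (ends f).2)) /
      ((1 + (ε e.1) ^ 2) * (1 + (ε f.1) ^ 2))


open Finset in
lemma EType.prod_univ (h : EType → ℂ) : ∏ s : EType, h s = h .a * h .b * h .c := by
  have : (Finset.univ : Finset EType) = {EType.a, EType.b, EType.c} := rfl
  rw [this]
  simp [Finset.prod_insert, mul_assoc]

lemma edgeAt_fst {α : Type} [Sub α] [One α] (v : HexVtx α) (s : EType) :
    (edgeAt v s).1 = s := by
  cases s <;> simp [edgeAt] <;> split_ifs <;> rfl

lemma edgeAt_ends_fst (n : ℕ) (g : EF n) : edgeAt (ends g).1 g.1 = g := by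
  obtain ⟨s, x, y⟩ := g
  cases s <;> simp [ends, edgeAt]

lemma edgeAt_ends_snd (n : ℕ) (g : EF n) : edgeAt (ends g).2 g.1 = g := by
  obtain ⟨s, x, y⟩ := g
  cases s <;> simp [ends, edgeAt]

lemma cspin_sq (s : Bool) : cspin s * cspin s = 1 := by cases s <;> simp [cspin]
lemma vertex_sum (a b c : ℝ) (ha : 0 < a) (hb : 0 < b) (hc : 0 < c)
    (ε : EType → ℂ)
    (hbc : ε .b * ε .c = (((a - b - c) / (a + b + c) : ℝ) : ℂ))
    (hac : ε .a * ε .c = (((b - a - c) / (a + b + c) : ℝ) : ℂ))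
    (hab : ε .a * ε .b = (((c - a - b) / (a + b + c) : ℝ) : ℂ))
    (t : EType → Bool) :
    (∑ x : Bool, ∏ s : EType, (1 + ε s * cspin x * cspin (t s))) =
      (8 / ((a : ℂ) + b + c)) * (vWt a b c (t .a) (t .b) (t .c) : ℂ) := by
  have hs0 : (0:ℝ) < a + b + c := by linarith
  have hs : ((a : ℂ) + b + c) ≠ 0 := by
    have := hs0.ne'
    exact_mod_cast Complex.ofReal_ne_zero.mpr this
  push_cast at hbc hac hab
  rw [eq_div_iff hs] at hbc hac hab
  have hsum : ε .a * ε .b + ε .a * ε .c + ε .b * ε .c = -1 := by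
    have h2 : (ε .a * ε .b + ε .a * ε .c + ε .b * ε .c) * ((a:ℂ) + b + c) =
        (-1) * ((a:ℂ) + b + c) := by linear_combination hab + hac + hbc
    exact mul_right_cancel₀ hs h2
  rw [Fintype.sum_bool]
  rw [EType.prod_univ, EType.prod_univ]
  rcases hta : t .a <;> rcases htb : t .b <;> rcases htc : t .c <;>
    simp only [cspin, if_true, if_false, vWt, hta, htb, htc] <;>
    norm_num <;> (try field_simp)
  · linear_combination 2*hsum
  · linear_combination 2*hab - 2*hac - 2*hbc
  · linear_combination -2*hab + 2*hac - 2*hbc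
  · linear_combination -2*hab - 2*hac + 2*hbc
  · linear_combination -2*hab - 2*hac + 2*hbc
  · linear_combination -2*hab + 2*hac - 2*hbc
  · linear_combination 2*hab - 2*hac - 2*hbc
  · linear_combination 2*hsum
lemma sum_v (n : ℕ) [NeZero n] (a b c : ℝ) (ha : 0 < a) (hb : 0 < b) (hc : 0 < c)
    (ε : EType → ℂ)
    (hbc : ε .b * ε .c = (((a - b - c) / (a + b + c) : ℝ) : ℂ))
    (hac : ε .a * ε .c = (((b - a - c) / (a + b + c) : ℝ) : ℂ))
    (hab : ε .a * ε .b = (((c - a - b) / (a + b + c) : ℝ) : ℂ))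
    (σe : ConfF n) :
    ∑ σv : VF n → Bool, spinWt n ε σv σe =
      (8 / ((a : ℂ) + b + c)) ^ (Fintype.card (VF n)) * (confWt n a b c σe : ℂ) := by
  unfold spinWt
  rw [← Fintype.prod_sum (fun (v : VF n) (x : Bool) =>
      ∏ s : EType, (1 + ε s * cspin x * cspin (σe (edgeAt v s))))]
  rw [confWt]
  push_cast
  have h : ∀ v : VF n, ∑ x : Bool, ∏ s : EType, (1 + ε s * cspin x * cspin (σe (edgeAt v s))) =
      (8 / ((a : ℂ) + b + c)) *
        (vWt a b c (σe (edgeAt v .a)) (σe (edgeAt v .b)) (σe (edgeAt v .c)) : ℂ) :=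
    fun v => vertex_sum a b c ha hb hc ε hbc hac hab (fun s => σe (edgeAt v s))
  calc ∏ v : VF n, ∑ x : Bool, ∏ s : EType, (1 + ε s * cspin x * cspin (σe (edgeAt v s)))
      = ∏ v : VF n, (8 / ((a : ℂ) + b + c)) *
        (vWt a b c (σe (edgeAt v .a)) (σe (edgeAt v .b)) (σe (edgeAt v .c)) : ℂ) :=
        Finset.prod_congr rfl (fun v _ => h v)
    _ = _ := by
        rw [Finset.prod_mul_distrib, Finset.prod_const]
        simp [Finset.card_univ]
/-- The endpoint-indexing map: `(g, i)` maps to the pair (endpoint of `g`, type of `g`). -/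
def phi (n : ℕ) (q : EF n × Bool) : VF n × EType :=
  (if q.2 then (ends q.1).2 else (ends q.1).1, q.1.1)

lemma phi_bij (n : ℕ) [NeZero n] : Function.Bijective (phi n) := by
  rw [Fintype.bijective_iff_injective_and_card]
  constructor
  · rintro ⟨⟨s, x, y⟩, i⟩ ⟨⟨s', x', y'⟩, i'⟩ h
    simp only [phi, Prod.mk.injEq] at h
    obtain ⟨h1, h2⟩ := h
    subst h2
    cases s <;> cases i <;> cases i' <;>
      simp only [ends, if_true, if_false, Bool.false_eq_true, Prod.mk.injEq] at h1 <;>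
      simp_all
  · simp [Fintype.card_prod, ZMod.card]
    ring
lemma spinWt_edge (n : ℕ) [NeZero n] (ε : EType → ℂ) (σv : VF n → Bool) (σe : ConfF n) :
    spinWt n ε σv σe = ∏ g : EF n,
      ((1 + ε g.1 * cspin (σv (ends g).1) * cspin (σe g)) *
       (1 + ε g.1 * cspin (σv (ends g).2) * cspin (σe g))) := by
  unfold spinWt
  rw [← Fintype.prod_prod_type'
    (f := fun (v : VF n) (s : EType) => (1 + ε s * cspin (σv v) * cspin (σe (edgeAt v s))))]
  rw [← Fintype.prod_bijective (phi n) (phi_bij n)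
    (fun q : EF n × Bool =>
      (1 + ε q.1.1 * cspin (σv (if q.2 then (ends q.1).2 else (ends q.1).1)) * cspin (σe q.1)))
    (fun p : VF n × EType => (1 + ε p.2 * cspin (σv p.1) * cspin (σe (edgeAt p.1 p.2))))
    (by
      rintro ⟨g, i⟩
      cases i <;>
        simp [phi, edgeAt_ends_fst, edgeAt_ends_snd])]
  rw [Fintype.prod_prod_type
    (f := fun q : EF n × Bool =>
      (1 + ε q.1.1 * cspin (σv (if q.2 then (ends q.1).2 else (ends q.1).1)) * cspin (σe q.1)))]
  simp [Fintype.prod_bool, mul_comm]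
lemma sum_e (n : ℕ) [NeZero n] (ε : EType → ℂ) (σv : VF n → Bool) :
    ∑ σe : ConfF n, spinWt n ε σv σe =
      (2:ℂ) ^ (Fintype.card (EF n)) * isingWt n ε σv := by
  simp_rw [spinWt_edge]
  rw [← Fintype.prod_sum (fun (g : EF n) (t : Bool) =>
      (1 + ε g.1 * cspin (σv (ends g).1) * cspin t) *
      (1 + ε g.1 * cspin (σv (ends g).2) * cspin t))]
  unfold isingWt
  rw [← Finset.card_univ, ← Finset.prod_const (b := (2:ℂ)), ← Finset.prod_mul_distrib]
  refine Finset.prod_congr rfl (fun g _ => ?_)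
  rw [Fintype.sum_bool]
  cases σv (ends g).1 <;> cases σv (ends g).2 <;> simp [cspin] <;> ring
lemma key_id (ε0 : ℂ) (x y : Bool) :
    ε0 * (cspin x + cspin y) * (1 + ε0 ^ 2) =
      ε0 * (cspin x + cspin y) * (1 + ε0 ^ 2 * cspin x * cspin y) := by
  cases x <;> cases y <;> simp [cspin] <;> ring

lemma sum_e_ins (n : ℕ) [NeZero n] (ε : EType → ℂ) (e f : EF n) (hef : e ≠ f)
    (he : 1 + (ε e.1) ^ 2 ≠ 0) (hf : 1 + (ε f.1) ^ 2 ≠ 0) (σv : VF n → Bool) :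
    ∑ σe : ConfF n, cspin (σe e) * cspin (σe f) * spinWt n ε σv σe =
      (2:ℂ) ^ (Fintype.card (EF n)) * (Dfactor n ε e f σv * isingWt n ε σv) := by
  have hQ : ∀ σe : ConfF n, cspin (σe e) * cspin (σe f) * spinWt n ε σv σe =
      ∏ g : EF n, ((if g = e then cspin (σe g) else 1) * ((if g = f then cspin (σe g) else 1) *
        ((1 + ε g.1 * cspin (σv (ends g).1) * cspin (σe g)) *
         (1 + ε g.1 * cspin (σv (ends g).2) * cspin (σe g))))) := by
    intro σe
    rw [Finset.prod_mul_distrib, Finset.prod_mul_distrib, Finset.prod_ite_eq',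
      Finset.prod_ite_eq', ← spinWt_edge]
    simp [mul_assoc]
  simp_rw [hQ]
  rw [← Fintype.prod_sum (fun (g : EF n) (t : Bool) =>
      ((if g = e then cspin t else 1) * ((if g = f then cspin t else 1) *
        ((1 + ε g.1 * cspin (σv (ends g).1) * cspin t) *
         (1 + ε g.1 * cspin (σv (ends g).2) * cspin t)))))]
  have hper : ∀ g : EF n, (∑ t : Bool,
      ((if g = e then cspin t else 1) * ((if g = f then cspin t else 1) *
        ((1 + ε g.1 * cspin (σv (ends g).1) * cspin t) *
         (1 + ε g.1 * cspin (σv (ends g).2) * cspin t))))) =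
      2 * (if g = e then ε g.1 * (cspin (σv (ends g).1) + cspin (σv (ends g).2))
           else if g = f then ε g.1 * (cspin (σv (ends g).1) + cspin (σv (ends g).2))
           else (1 + ε g.1 ^ 2 * cspin (σv (ends g).1) * cspin (σv (ends g).2))) := by
    intro g
    rw [Fintype.sum_bool]
    by_cases hge : g = e
    · have hgf : g ≠ f := by rw [hge]; exact hef
      rw [if_pos hge, if_pos hge, if_neg hgf, if_pos hge, if_neg hgf]
      cases σv (ends g).1 <;> cases σv (ends g).2 <;> simp [cspin] <;> ring
    · rw [if_neg hge, if_neg hge, if_neg hge]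
      by_cases hgf : g = f
      · rw [if_pos hgf, if_pos hgf, if_pos hgf]
        cases σv (ends g).1 <;> cases σv (ends g).2 <;> simp [cspin] <;> ring
      · rw [if_neg hgf, if_neg hgf, if_neg hgf]
        cases σv (ends g).1 <;> cases σv (ends g).2 <;> simp [cspin] <;> ring
  rw [Finset.prod_congr rfl (fun g _ => hper g)]
  rw [Finset.prod_mul_distrib, Finset.prod_const, Finset.card_univ]
  congr 1
  -- now: ∏ M = Dfactor * isingWt
  set M : EF n → ℂ := fun g =>
      (if g = e then ε g.1 * (cspin (σv (ends g).1) + cspin (σv (ends g).2))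
       else if g = f then ε g.1 * (cspin (σv (ends g).1) + cspin (σv (ends g).2))
       else (1 + ε g.1 ^ 2 * cspin (σv (ends g).1) * cspin (σv (ends g).2))) with hM
  set N : EF n → ℂ := fun g =>
      (1 + ε g.1 ^ 2 * cspin (σv (ends g).1) * cspin (σv (ends g).2)) with hN
  have hfe : f ∈ Finset.univ.erase e := Finset.mem_erase.mpr ⟨hef.symm, Finset.mem_univ f⟩
  rw [Dfactor, isingWt, div_mul_eq_mul_div, eq_div_iff (mul_ne_zero he hf)]
  rw [← Finset.mul_prod_erase Finset.univ M (Finset.mem_univ e),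
      ← Finset.mul_prod_erase _ M hfe,
      ← Finset.mul_prod_erase Finset.univ _ (Finset.mem_univ e),
      ← Finset.mul_prod_erase _ _ hfe]
  have hrest : ∏ g ∈ (Finset.univ.erase e).erase f, M g =
      ∏ g ∈ (Finset.univ.erase e).erase f, N g := by
    refine Finset.prod_congr rfl (fun g hg => ?_)
    have h1 : g ≠ f := (Finset.mem_erase.mp hg).1
    have h2 : g ≠ e := (Finset.mem_erase.mp (Finset.mem_erase.mp hg).2).1
    rw [hM]
    simp only [if_neg h1, if_neg h2, hN]
  rw [hrest]
  have hMe : M e = ε e.1 * (cspin (σv (ends e).1) + cspin (σv (ends e).2)) := by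
    rw [hM]; simp
  have hMf : M f = ε f.1 * (cspin (σv (ends f).1) + cspin (σv (ends f).2)) := by
    rw [hM]; simp [Ne.symm hef]
  rw [hMe, hMf]
  have k1 := key_id (ε e.1) (σv (ends e).1) (σv (ends e).2)
  have k2 := key_id (ε f.1) (σv (ends f).1) (σv (ends f).2)
  set R := ∏ g ∈ (Finset.univ.erase e).erase f, N g with hR
  linear_combination
    (ε f.1 * (cspin (σv (ends f).1) + cspin (σv (ends f).2)) * (1 + ε f.1 ^ 2) * R) * k1 +
    (ε e.1 * (cspin (σv (ends e).1) + cspin (σv (ends e).2)) *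
      (1 + ε e.1 ^ 2 * cspin (σv (ends e).1) * cspin (σv (ends e).2)) * R) * k2
lemma vWt_nonneg (a b c : ℝ) (ha : 0 < a) (hb : 0 < b) (hc : 0 < c) (sa sb sc : Bool) :
    0 ≤ vWt a b c sa sb sc := by
  unfold vWt; split_ifs <;> linarith

lemma Zn_pos (n : ℕ) [NeZero n] (a b c : ℝ) (ha : 0 < a) (hb : 0 < b) (hc : 0 < c) :
    0 < Zn n a b c := by
  unfold Zn
  refine Finset.sum_pos' (fun σ _ => Finset.prod_nonneg fun v _ =>
    vWt_nonneg a b c ha hb hc _ _ _) ?_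
  refine ⟨fun g => g.1 = EType.a, Finset.mem_univ _, ?_⟩
  refine Finset.prod_pos fun v _ => ?_
  have h1 : (edgeAt v EType.a).1 = EType.a := edgeAt_fst v _
  have h2 : (edgeAt v EType.b).1 = EType.b := edgeAt_fst v _
  have h3 : (edgeAt v EType.c).1 = EType.c := edgeAt_fst v _
  simp only [h1, h2, h3, decide_eq_true_eq]
  simp [vWt, ha]
lemma cast_spin (s : Bool) : ((if s then (1:ℝ) else -1 : ℝ) : ℂ) = cspin s := by
  cases s <;> simp [cspin]
/-- two-edge correlation formula. The 1-2 model two-edge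
correlation is a ratio of Ising-type sums over vertex spin configurations. -/
theorem two_edge_correlation_formula
    (n : ℕ) [NeZero n] (a b c : ℝ) (ha : 0 < a) (hb : 0 < b) (hc : 0 < c)
    (A B C : ℝ)
    (hA : A = (a - b - c) / (a + b + c))
    (hB : B = (b - a - c) / (a + b + c))
    (hC : C = (c - a - b) / (a + b + c))
    (hABC : A * B * C ≠ 0)
    (ε : EType → ℂ)
    (hbc : ε .b * ε .c = (A : ℂ))
    (hac : ε .a * ε .c = (B : ℂ))
    (hab : ε .a * ε .b = (C : ℂ))
    (e f : EF n) (hef : e ≠ f)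
    (he : 1 + (ε e.1) ^ 2 ≠ 0) (hf : 1 + (ε f.1) ^ 2 ≠ 0) :
    (∑ σv : VF n → Bool, isingWt n ε σv) ≠ 0 ∧
      ((corrFin n a b c e f : ℝ) : ℂ) =
        (∑ σv : VF n → Bool, Dfactor n ε e f σv * isingWt n ε σv) /
          (∑ σv : VF n → Bool, isingWt n ε σv) := by
  subst hA hB hC
  set K : ℂ := 8 / ((a : ℂ) + b + c) with hKdef
  have hs0 : (0:ℝ) < a + b + c := by linarith
  have hsC : ((a : ℂ) + b + c) ≠ 0 := by
    have := hs0.ne'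
    exact_mod_cast Complex.ofReal_ne_zero.mpr this
  have hK : K ≠ 0 := div_ne_zero (by norm_num) hsC
  have hZ : 0 < Zn n a b c := Zn_pos n a b c ha hb hc
  have hZC : ((Zn n a b c : ℝ) : ℂ) ≠ 0 := Complex.ofReal_ne_zero.mpr hZ.ne'
  set Nc := Fintype.card (VF n)
  set Mc := Fintype.card (EF n)
  -- double sum identities
  have h1 : (2:ℂ) ^ Mc * ∑ σv : VF n → Bool, isingWt n ε σv =
      K ^ Nc * ((Zn n a b c : ℝ) : ℂ) := by
    have swap := Finset.sum_comm (s := (Finset.univ : Finset (VF n → Bool)))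
      (t := (Finset.univ : Finset (ConfF n))) (f := fun σv σe => spinWt n ε σv σe)
    calc (2:ℂ) ^ Mc * ∑ σv : VF n → Bool, isingWt n ε σv
        = ∑ σv : VF n → Bool, ∑ σe : ConfF n, spinWt n ε σv σe := by
          rw [Finset.mul_sum]
          exact (Finset.sum_congr rfl (fun σv _ => sum_e n ε σv)).symm
      _ = ∑ σe : ConfF n, ∑ σv : VF n → Bool, spinWt n ε σv σe := swap
      _ = ∑ σe : ConfF n, K ^ Nc * ((confWt n a b c σe : ℝ) : ℂ) :=
          Finset.sum_congr rfl (fun σe _ => sum_v n a b c ha hb hc ε hbc hac hab σe)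
      _ = K ^ Nc * ((Zn n a b c : ℝ) : ℂ) := by
          rw [← Finset.mul_sum, Zn]
          push_cast
          ring
  have h2 : (2:ℂ) ^ Mc * ∑ σv : VF n → Bool, Dfactor n ε e f σv * isingWt n ε σv =
      K ^ Nc * ((∑ σ : ConfF n,
        (if σ e then (1 : ℝ) else -1) * (if σ f then (1 : ℝ) else -1) *
          confWt n a b c σ : ℝ) : ℂ) := by
    have swap := Finset.sum_comm (s := (Finset.univ : Finset (VF n → Bool)))
      (t := (Finset.univ : Finset (ConfF n)))
      (f := fun σv σe => cspin (σe e) * cspin (σe f) * spinWt n ε σv σe)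
    calc (2:ℂ) ^ Mc * ∑ σv : VF n → Bool, Dfactor n ε e f σv * isingWt n ε σv
        = ∑ σv : VF n → Bool, ∑ σe : ConfF n,
            cspin (σe e) * cspin (σe f) * spinWt n ε σv σe := by
          rw [Finset.mul_sum]
          exact (Finset.sum_congr rfl (fun σv _ => sum_e_ins n ε e f hef he hf σv)).symm
      _ = ∑ σe : ConfF n, ∑ σv : VF n → Bool,
            cspin (σe e) * cspin (σe f) * spinWt n ε σv σe := swap
      _ = ∑ σe : ConfF n, cspin (σe e) * cspin (σe f) *
            (K ^ Nc * ((confWt n a b c σe : ℝ) : ℂ)) := by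
          refine Finset.sum_congr rfl (fun σe _ => ?_)
          rw [← Finset.mul_sum, sum_v n a b c ha hb hc ε hbc hac hab σe]
      _ = _ := by
          push_cast
          rw [Finset.mul_sum]
          refine Finset.sum_congr rfl (fun σe _ => ?_)
          rw [← cast_spin (σe e), ← cast_spin (σe f)]
          ring
  have hW : (∑ σv : VF n → Bool, isingWt n ε σv) ≠ 0 := by
    intro h0
    rw [h0, mul_zero] at h1
    exact (mul_ne_zero (pow_ne_zero _ hK) hZC) h1.symm
  refine ⟨hW, ?_⟩
  rw [corrFin, Complex.ofReal_div]
  rw [div_eq_div_iff hZC hW]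
  have h2M : ((2:ℂ) ^ Mc) ≠ 0 := pow_ne_zero _ (by norm_num)
  apply mul_left_cancel₀ h2M
  linear_combination
    ((∑ σ : ConfF n, (if σ e then (1 : ℝ) else -1) * (if σ f then (1 : ℝ) else -1) *
      confWt n a b c σ : ℝ) : ℂ) * h1 - ((Zn n a b c : ℝ) : ℂ) * h2
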